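/- Let B be a commutative ring, Δ a finite standard set in ℕ^d of cardinality n, and I ⊆ B[x] an ideal such that (i) the classes of monomials x^e, e ∈ Δ, form a B-basis of B[x]/I, and (ii) for every f ∈ I, the initial form in_<ξ(f) involves only monomials x^e with e ∉ Δ. For ξ ∈ ℤ^d, define I(t) := I(t,t⁻¹) ∩ B[t,x], where I(t,t⁻¹) ⊆ B[t,t⁻¹,x] is generated by the elements t·f := Σ t^{-ξ·e} c_e x^e for f = Σ c_e x^e ∈ I. Then B[t,x]/I(t) is a free B[t]-module with basis the monomials x^e, e ∈ Δ, and the fiber I(0) := image of I(t) in B[x] at t = 0 equals the monomial ideal I^Δ generated by x^e, e ∉ Δ. -/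

import Mathlib

open MvPolynomial

/-- The torus action `t·f = Σ_e t^{-ξ·e} c_e x^e` on a polynomial `f = Σ_e c_e x^e`,
landing in `B[t,t⁻¹][x]`. -/
noncomputable def torusAct {d : ℕ} {B : Type*} [CommRing B] (ξ : Fin d → ℤ)
    (f : MvPolynomial (Fin d) B) : MvPolynomial (Fin d) (LaurentPolynomial B) :=
  ∑ e ∈ f.support,
    monomial e (LaurentPolynomial.T (-(∑ i, ξ i * (e i : ℤ))) *
      LaurentPolynomial.C (f.coeff e))

namespace BBAux

open LaurentPolynomial

lemma T_prod {B : Type*} [CommRing B] {ι : Type*} (s : Finset ι) (m : ι → ℤ) :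
    (∏ i ∈ s, (T (m i) : LaurentPolynomial B)) = T (∑ i ∈ s, m i) := by
  classical
  induction s using Finset.cons_induction with
  | empty => simp
  | cons a s ha ih => rw [Finset.prod_cons, Finset.sum_cons, ih, ← T_add]

noncomputable def lc {B : Type*} [CommRing B] (n : ℤ) : LaurentPolynomial B →+ B :=
  (Finsupp.applyAddHom (M := B) n).comp (AddMonoidAlgebra.coeffAddEquiv (R := B) (M := ℤ)).toAddMonoidHom

lemma lc_mul_C {B : Type*} [CommRing B] (n : ℤ) (a : LaurentPolynomial B) (b : B) :
    lc n (a * LaurentPolynomial.C b) = lc n a * b :=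
  AddMonoidAlgebra.coeff_mul_single_zero a b n

noncomputable def psi {d : ℕ} {B : Type*} [CommRing B] (n : ℤ) :
    MvPolynomial (Fin d) (LaurentPolynomial B) →+ MvPolynomial (Fin d) B :=
  { toFun := AddMonoidAlgebra.map (lc n), map_zero' := AddMonoidAlgebra.map_zero _,
    map_add' := AddMonoidAlgebra.map_add _ }

lemma psi_coeff {d : ℕ} {B : Type*} [CommRing B] (n : ℤ)
    (p : MvPolynomial (Fin d) (LaurentPolynomial B)) (e : Fin d →₀ ℕ) :
    coeff e (psi n p) = lc n (coeff e p) := rfl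

lemma psi_monomial {d : ℕ} {B : Type*} [CommRing B] (n : ℤ) (e : Fin d →₀ ℕ)
    (a : LaurentPolynomial B) :
    psi n (monomial e a) = monomial e (lc n a) := by
  rw [← single_eq_monomial, ← single_eq_monomial]
  exact AddMonoidAlgebra.map_single (lc n) a e

lemma psi_mul {d : ℕ} {B : Type*} [CommRing B] (n : ℤ)
    (h : MvPolynomial (Fin d) (LaurentPolynomial B)) (f : MvPolynomial (Fin d) B) :
    psi n (h * MvPolynomial.map (LaurentPolynomial.C : B →+* LaurentPolynomial B) f)
      = psi n h * f := by
  apply MvPolynomial.ext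
  intro e
  rw [psi_coeff, coeff_mul, coeff_mul, map_sum]
  refine Finset.sum_congr rfl fun x _ => ?_
  rw [coeff_map, lc_mul_C, psi_coeff]

lemma psi_mem {d : ℕ} {B : Type*} [CommRing B] (n : ℤ) (I : Ideal (MvPolynomial (Fin d) B))
    (p : MvPolynomial (Fin d) (LaurentPolynomial B))
    (hp : p ∈ Ideal.map (MvPolynomial.map (LaurentPolynomial.C : B →+* LaurentPolynomial B)) I) :
    psi n p ∈ I := by
  rw [Ideal.map, Ideal.span] at hp
  obtain ⟨c, hsupp, rfl⟩ := Submodule.mem_span_set.mp hp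
  rw [Finsupp.sum, map_sum]
  refine Ideal.sum_mem I fun m hm => ?_
  obtain ⟨f, hfI, rfl⟩ := hsupp hm
  rw [smul_eq_mul, psi_mul]
  exact Ideal.mul_mem_left I _ hfI

noncomputable def twist {d : ℕ} {B : Type*} [CommRing B] (ζ : Fin d → ℤ) :
    MvPolynomial (Fin d) (LaurentPolynomial B) ≃ₐ[LaurentPolynomial B]
      MvPolynomial (Fin d) (LaurentPolynomial B) :=
  AlgEquiv.ofAlgHom (aeval fun i => MvPolynomial.C (T (ζ i)) * X i)
    (aeval fun i => MvPolynomial.C (T (-ζ i)) * X i)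
    (by ext i; simp [← MvPolynomial.C_mul, ← T_add])
    (by ext i; simp [← MvPolynomial.C_mul, ← T_add])

lemma twist_symm_apply {d : ℕ} {B : Type*} [CommRing B] (ζ : Fin d → ℤ)
    (p : MvPolynomial (Fin d) (LaurentPolynomial B)) :
    (twist ζ).symm p = twist (fun i => -ζ i) p := rfl


noncomputable def twistR {d : ℕ} {B : Type*} [CommRing B] (ζ : Fin d → ℤ) :
    MvPolynomial (Fin d) (LaurentPolynomial B) ≃+* MvPolynomial (Fin d) (LaurentPolynomial B) :=
  (twist ζ).toRingEquiv

lemma twistR_coe {d : ℕ} {B : Type*} [CommRing B] (ζ : Fin d → ℤ) :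
    ⇑((twistR (d := d) (B := B) ζ : _ ≃+* _) :
      MvPolynomial (Fin d) (LaurentPolynomial B) →+*
        MvPolynomial (Fin d) (LaurentPolynomial B)) = ⇑(twist ζ) := rfl

lemma twistR_symm_coe_apply {d : ℕ} {B : Type*} [CommRing B] (ζ : Fin d → ℤ)
    (p : MvPolynomial (Fin d) (LaurentPolynomial B)) :
    ((((twistR (d := d) (B := B) ζ).symm :
        MvPolynomial (Fin d) (LaurentPolynomial B) ≃+*
          MvPolynomial (Fin d) (LaurentPolynomial B)) :
      MvPolynomial (Fin d) (LaurentPolynomial B) →+*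
        MvPolynomial (Fin d) (LaurentPolynomial B))) p = twist (fun i => -ζ i) p := rfl

lemma twistR_symm_apply {d : ℕ} {B : Type*} [CommRing B] (ζ : Fin d → ℤ)
    (p : MvPolynomial (Fin d) (LaurentPolynomial B)) :
    (twistR (d := d) (B := B) ζ).symm p = twist (fun i => -ζ i) p := rfl

lemma twist_monomial {d : ℕ} {B : Type*} [CommRing B] (ζ : Fin d → ℤ) (e : Fin d →₀ ℕ)
    (a : LaurentPolynomial B) :
    twist ζ (monomial e a) = monomial e (T (∑ i, ζ i * (e i : ℤ)) * a) := by
  show (aeval fun i => MvPolynomial.C (T (ζ i)) * X i) (monomial e a) = _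
  rw [aeval_monomial]
  have h1 : (e.prod fun i k => (MvPolynomial.C (T (ζ i) : LaurentPolynomial B) * X i) ^ k)
      = ∏ i, (MvPolynomial.C (T (ζ i) : LaurentPolynomial B) * X i) ^ e i :=
    Finsupp.prod_fintype _ _ (fun i => pow_zero _)
  have h2 : (monomial e (1 : LaurentPolynomial B))
      = ∏ i, (X i : MvPolynomial (Fin d) (LaurentPolynomial B)) ^ e i := by
    rw [monomial_eq, map_one, one_mul]
    exact Finsupp.prod_fintype _ _ (fun i => pow_zero _)
  have h3 : (∏ i, (MvPolynomial.C (T (ζ i) : LaurentPolynomial B)) ^ e i)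
      = MvPolynomial.C (σ := Fin d) (T (∑ i, ζ i * (e i : ℤ))) := by
    simp only [← map_pow (MvPolynomial.C :
      LaurentPolynomial B →+* MvPolynomial (Fin d) (LaurentPolynomial B))]
    rw [← map_prod (MvPolynomial.C :
      LaurentPolynomial B →+* MvPolynomial (Fin d) (LaurentPolynomial B))]
    congr 1
    rw [show (∏ i, (T (ζ i) : LaurentPolynomial B) ^ e i)
        = ∏ i, (T ((e i : ℤ) * ζ i) : LaurentPolynomial B)
      from Finset.prod_congr rfl fun i _ => T_pow _ _, T_prod]
    congr 1
    exact Finset.sum_congr rfl fun i _ => mul_comm _ _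
  rw [h1, algebraMap_eq]
  simp only [mul_pow, Finset.prod_mul_distrib, h3, ← h2]
  rw [← mul_assoc, ← MvPolynomial.C_mul, C_mul_monomial, mul_one, mul_comm]

lemma torusAct_eq {d : ℕ} {B : Type*} [CommRing B] (ξ : Fin d → ℤ)
    (f : MvPolynomial (Fin d) B) :
    torusAct ξ f = twist (fun i => -ξ i)
      (MvPolynomial.map (LaurentPolynomial.C : B →+* LaurentPolynomial B) f) := by
  conv_rhs => rw [f.as_sum]
  rw [map_sum, map_sum]
  refine Finset.sum_congr rfl fun e he => ?_
  rw [map_monomial, twist_monomial]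
  congr 2
  simp [neg_mul, Finset.sum_neg_distrib]

lemma mk_monomial_smul {d : ℕ} {B : Type*} [CommRing B] (I : Ideal (MvPolynomial (Fin d) B))
    (g : Fin d →₀ ℕ) (b : B) :
    Ideal.Quotient.mk I (monomial g b) = b • Ideal.Quotient.mk I (monomial g 1) := by
  have : monomial g b = b • (monomial g (1 : B)) := by
    rw [smul_monomial, smul_eq_mul, mul_one]
  rw [this, ← Ideal.Quotient.mkₐ_eq_mk (R₁ := B), map_smul]

lemma lemC {d : ℕ} {B : Type*} [CommRing B] (Δ : Finset (Fin d →₀ ℕ))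
    (I : Ideal (MvPolynomial (Fin d) B))
    (bI : Module.Basis Δ B (MvPolynomial (Fin d) B ⧸ I))
    (hbI : ∀ e : Δ, bI e = Ideal.Quotient.mk I (monomial (e : Fin d →₀ ℕ) 1))
    (a : Δ → LaurentPolynomial B)
    (ha : (∑ g ∈ Δ.attach, monomial (g : Fin d →₀ ℕ) (a g)) ∈
      Ideal.map (MvPolynomial.map (LaurentPolynomial.C : B →+* LaurentPolynomial B)) I) :
    ∀ g, a g = 0 := by
  intro g
  have key : ∀ n : ℤ, lc n (a g) = 0 := by
    intro n
    have h1 : psi n (∑ g ∈ Δ.attach, monomial (g : Fin d →₀ ℕ) (a g)) ∈ I := psi_mem n I _ ha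
    rw [map_sum] at h1
    simp only [psi_monomial] at h1
    have h2 : (Ideal.Quotient.mk I)
        (∑ g ∈ Δ.attach, monomial (g : Fin d →₀ ℕ) (lc n (a g))) = 0 :=
      Ideal.Quotient.eq_zero_iff_mem.mpr h1
    rw [map_sum] at h2
    have h3 : ∑ g : Δ, lc n (a g) • bI g = 0 := by
      rw [Finset.univ_eq_attach]
      calc ∑ g ∈ Δ.attach, lc n (a g) • bI g
          = ∑ g ∈ Δ.attach,
              (Ideal.Quotient.mk I) (monomial (g : Fin d →₀ ℕ) (lc n (a g))) :=
            Finset.sum_congr rfl fun x _ => by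
              rw [hbI]; exact (mk_monomial_smul I _ _).symm
        _ = 0 := h2
    exact Fintype.linearIndependent_iff.mp bI.linearIndependent _ h3 g
  exact AddMonoidAlgebra.ext (Finsupp.ext key)

lemma normal_form {d : ℕ} {B : Type*} [CommRing B] (ξ : Fin d → ℤ)
    (Δ : Finset (Fin d →₀ ℕ))
    (I : Ideal (MvPolynomial (Fin d) B))
    (bI : Module.Basis Δ B (MvPolynomial (Fin d) B ⧸ I))
    (hbI : ∀ e : Δ, bI e = Ideal.Quotient.mk I (monomial (e : Fin d →₀ ℕ) 1))
    (hin : ∀ f ∈ I, ∀ e ∈ f.support,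
      (∀ g ∈ f.support, (∑ i, ξ i * (g i : ℤ)) ≤ ∑ i, ξ i * (e i : ℤ)) → e ∉ Δ)
    (e : Fin d →₀ ℕ) (he : e ∉ Δ) :
    ∃ c : Δ → B,
      (monomial e (1:B) - ∑ g ∈ Δ.attach, monomial (g : Fin d →₀ ℕ) (c g)) ∈ I ∧
      ∀ g : Δ, c g ≠ 0 →
        (∑ i, ξ i * (((g : Fin d →₀ ℕ)) i : ℤ)) < ∑ i, ξ i * (e i : ℤ) := by
  classical
  set w : (Fin d →₀ ℕ) → ℤ := fun u => ∑ i, ξ i * (u i : ℤ) with hw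
  set c : Δ → B := fun g => bI.repr (Ideal.Quotient.mk I (monomial e 1)) g with hc
  set f : MvPolynomial (Fin d) B :=
    monomial e (1:B) - ∑ g ∈ Δ.attach, monomial (g : Fin d →₀ ℕ) (c g) with hf
  have hfI : f ∈ I := by
    rw [← Ideal.Quotient.eq_zero_iff_mem, map_sub, map_sum, sub_eq_zero]
    have : ∀ g ∈ Δ.attach, Ideal.Quotient.mk I (monomial (g : Fin d →₀ ℕ) (c g))
        = c g • bI g := by
      intro g _
      rw [mk_monomial_smul, hbI]
    rw [Finset.sum_congr rfl this, ← Finset.univ_eq_attach]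
    exact (bI.sum_repr (Ideal.Quotient.mk I (monomial e 1))).symm
  refine ⟨c, hfI, ?_⟩
  have hsum : ∀ u : Fin d →₀ ℕ,
      coeff u (∑ g ∈ Δ.attach, monomial (g : Fin d →₀ ℕ) (c g))
        = if hu : u ∈ Δ then c ⟨u, hu⟩ else 0 := by
    intro u
    rw [coeff_sum]
    by_cases hu : u ∈ Δ
    · rw [dif_pos hu]
      rw [Finset.sum_eq_single_of_mem ⟨u, hu⟩ (Finset.mem_attach _ _)]
      · rw [coeff_monomial, if_pos rfl]
      · intro g _ hg
        rw [coeff_monomial, if_neg]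
        exact fun h => hg (Subtype.ext h)
    · rw [dif_neg hu]
      refine Finset.sum_eq_zero fun g _ => ?_
      rw [coeff_monomial, if_neg]
      rintro rfl; exact hu g.2
  have hcg : ∀ g : Δ, coeff (g : Fin d →₀ ℕ) f = - c g := by
    intro g
    rw [hf, coeff_sub, coeff_monomial, if_neg, hsum, dif_pos g.2, zero_sub]
    · rintro rfl; exact he g.2
  have hsupp : ∀ u ∈ f.support, u = e ∨ u ∈ Δ := by
    intro u hu
    by_contra hcon
    push_neg at hcon
    apply mem_support_iff.mp hu
    rw [hf, coeff_sub, coeff_monomial, if_neg (fun h => hcon.1 h.symm), hsum,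
      dif_neg hcon.2, sub_zero]
  intro g hg
  have hgsupp : (g : Fin d →₀ ℕ) ∈ f.support := by
    rw [mem_support_iff, hcg]
    simpa using hg
  obtain ⟨u₀, hu₀s, hu₀max⟩ := f.support.exists_max_image w ⟨_, hgsupp⟩
  have hu₀ : u₀ = e := by
    rcases hsupp u₀ hu₀s with h | h
    · exact h
    · exact absurd h (hin f hfI u₀ hu₀s hu₀max)
  subst hu₀
  have hle : w (g : Fin d →₀ ℕ) ≤ w u₀ := hu₀max _ hgsupp
  rcases lt_or_eq_of_le hle with h | h
  · exact h
  · exfalso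
    refine hin f hfI (g : Fin d →₀ ℕ) hgsupp (fun u hu => ?_) g.2
    rw [← h] at hu₀max
    exact hu₀max u hu

noncomputable def Gdef {d : ℕ} {B : Type*} [CommRing B] (ξ : Fin d → ℤ)
    (Δ : Finset (Fin d →₀ ℕ)) (cf : Δ → B) (e : Fin d →₀ ℕ) :
    MvPolynomial (Fin d) (Polynomial B) :=
  monomial e 1 - ∑ g ∈ Δ.attach, monomial (g : Fin d →₀ ℕ)
    (Polynomial.monomial
      ((∑ i, ξ i * (e i : ℤ)) - ∑ i, ξ i * (((g : Fin d →₀ ℕ)) i : ℤ)).toNat (cf g))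

lemma Gdef_eq {d : ℕ} {B : Type*} [CommRing B] (ξ : Fin d → ℤ)
    (Δ : Finset (Fin d →₀ ℕ)) (cf : Δ → B) (e : Fin d →₀ ℕ) :
    Gdef ξ Δ cf e = monomial e 1 - ∑ g ∈ Δ.attach, monomial (g : Fin d →₀ ℕ)
      (Polynomial.monomial
        ((∑ i, ξ i * (e i : ℤ)) - ∑ i, ξ i * (((g : Fin d →₀ ℕ)) i : ℤ)).toNat (cf g)) := rfl

lemma Gev0 {d : ℕ} {B : Type*} [CommRing B] (ξ : Fin d → ℤ) (Δ : Finset (Fin d →₀ ℕ))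
    (e : Fin d →₀ ℕ) (cf : Δ → B)
    (hlt : ∀ g : Δ, cf g ≠ 0 →
      (∑ i, ξ i * (((g : Fin d →₀ ℕ)) i : ℤ)) < ∑ i, ξ i * (e i : ℤ)) :
    MvPolynomial.map (Polynomial.evalRingHom (0 : B)) (Gdef ξ Δ cf e) = monomial e 1 := by
  rw [Gdef_eq, map_sub, map_sum]
  simp only [map_monomial]
  have hz : ∀ g ∈ Δ.attach, (monomial (g : Fin d →₀ ℕ)
      (Polynomial.evalRingHom (0:B)
        (Polynomial.monomial
          ((∑ i, ξ i * (e i : ℤ)) - ∑ i, ξ i * (((g : Fin d →₀ ℕ)) i : ℤ)).toNat (cf g)))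
        : MvPolynomial (Fin d) B) = 0 := by
    intro g _
    by_cases hcz : cf g = 0
    · simp [hcz]
    · have hpos : (0:ℤ) < (∑ i, ξ i * (e i : ℤ)) - ∑ i, ξ i * (((g : Fin d →₀ ℕ)) i : ℤ) :=
        sub_pos.mpr (hlt g hcz)
      have hk : ((∑ i, ξ i * (e i : ℤ)) - ∑ i, ξ i * (((g : Fin d →₀ ℕ)) i : ℤ)).toNat ≠ 0 := by
        intro h
        rw [← Int.toNat_of_nonneg (le_of_lt hpos), h] at hpos
        simp at hpos
      rw [Polynomial.coe_evalRingHom, Polynomial.eval_monomial, zero_pow hk, mul_zero,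
        monomial_zero]
  rw [Finset.sum_eq_zero hz, sub_zero, map_one]

lemma Gsmul {d : ℕ} {B : Type*} [CommRing B] (ξ : Fin d → ℤ) (Δ : Finset (Fin d →₀ ℕ))
    (e : Fin d →₀ ℕ) (cf : Δ → B) (a : Polynomial B) :
    MvPolynomial.C a * Gdef ξ Δ cf e = monomial e a - ∑ g ∈ Δ.attach,
      monomial (g : Fin d →₀ ℕ) (a * Polynomial.monomial
        ((∑ i, ξ i * (e i : ℤ)) - ∑ i, ξ i * (((g : Fin d →₀ ℕ)) i : ℤ)).toNat (cf g)) := by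
  rw [Gdef_eq, mul_sub, Finset.mul_sum]
  congr 1
  · rw [MvPolynomial.C_mul_monomial, mul_one]
  · exact Finset.sum_congr rfl fun g _ => MvPolynomial.C_mul_monomial

lemma Gcalc {d : ℕ} {B : Type*} [CommRing B] (ξ : Fin d → ℤ) (Δ : Finset (Fin d →₀ ℕ))
    (e : Fin d →₀ ℕ) (cf : Δ → B)
    (hlt : ∀ g : Δ, cf g ≠ 0 →
      (∑ i, ξ i * (((g : Fin d →₀ ℕ)) i : ℤ)) < ∑ i, ξ i * (e i : ℤ)) :
    MvPolynomial.map (Polynomial.toLaurent (R := B)) (Gdef ξ Δ cf e)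
    = MvPolynomial.C (T (∑ i, ξ i * (e i : ℤ))) *
        torusAct ξ (monomial e (1:B) - ∑ g ∈ Δ.attach, monomial (g : Fin d →₀ ℕ) (cf g)) := by
  rw [Gdef_eq, BBAux.torusAct_eq]
  simp only [map_sub, map_sum, map_monomial, BBAux.twist_monomial, map_one, mul_sub, Finset.mul_sum,
    MvPolynomial.C_mul_monomial, mul_one, Polynomial.toLaurent_C_mul_T]
  congr 1
  · congr 1
    have : (∑ i, (-ξ i) * ((e i : ℤ))) = -(∑ i, ξ i * (e i : ℤ)) := by
      simp [neg_mul, Finset.sum_neg_distrib]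
    rw [this, ← T_add, add_neg_cancel, T_zero]
  · refine Finset.sum_congr rfl fun g _ => ?_
    congr 1
    by_cases hz : cf g = 0
    · simp [hz]
    · have hpos : (0:ℤ) < (∑ i, ξ i * (e i : ℤ)) - ∑ i, ξ i * (((g : Fin d →₀ ℕ)) i : ℤ) :=
        sub_pos.mpr (hlt g hz)
      have hneg : (∑ i, (-ξ i) * (((g : Fin d →₀ ℕ)) i : ℤ))
          = -(∑ i, ξ i * (((g : Fin d →₀ ℕ)) i : ℤ)) := by
        simp [neg_mul, Finset.sum_neg_distrib]
      rw [hneg, ← mul_assoc, ← T_add, mul_comm]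
      congr 2
      rw [Int.toNat_of_nonneg (le_of_lt hpos)]
      ring



end BBAux

set_option maxHeartbeats 1000000 in
set_option synthInstance.maxHeartbeats 200000 in
/-- Hard direction of the reformulation of Białynicki-Birula membership: if the
monomials of `Δ` form a basis of `B[x]/I` and every initial form of an element of `I`
is supported outside `Δ`, then `B[t,x]/I(t)` is free over `B[t]` with basis the
monomials of `Δ`, and the fiber `I(0)` equals the monomial ideal `I^Δ`. -/
theorem bb_membership_reformulation (d : ℕ) (B : Type*) [CommRing B]
    [IsNoetherianRing B] (ξ : Fin d → ℤ)
    (Δ : Finset (Fin d →₀ ℕ))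
    (hstd : ∀ e ∈ Δ, ∀ g : Fin d →₀ ℕ, (∀ i, g i ≤ e i) → g ∈ Δ)
    (I : Ideal (MvPolynomial (Fin d) B))
    (bI : Module.Basis Δ B (MvPolynomial (Fin d) B ⧸ I))
    (hbI : ∀ e : Δ, bI e = Ideal.Quotient.mk I (monomial (e : Fin d →₀ ℕ) 1))
    (hin : ∀ f ∈ I, ∀ e ∈ f.support,
      (∀ g ∈ f.support, (∑ i, ξ i * (g i : ℤ)) ≤ ∑ i, ξ i * (e i : ℤ)) → e ∉ Δ)
    (Itt : Ideal (MvPolynomial (Fin d) (LaurentPolynomial B)))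
    (hItt : Itt = Ideal.span (torusAct ξ '' I))
    (It : Ideal (MvPolynomial (Fin d) (Polynomial B)))
    (hIt : It = Ideal.comap (MvPolynomial.map (Polynomial.toLaurent (R := B))) Itt) :
    (∃ bt : Module.Basis Δ (Polynomial B) (MvPolynomial (Fin d) (Polynomial B) ⧸ It),
      ∀ e : Δ, bt e = Ideal.Quotient.mk It (monomial (e : Fin d →₀ ℕ) 1)) ∧
    Ideal.map (MvPolynomial.map (Polynomial.evalRingHom (0 : B))) It =
      Ideal.span {g : MvPolynomial (Fin d) B |
        ∃ e : Fin d →₀ ℕ, e ∉ Δ ∧ g = monomial e 1} := by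
  classical
  set II : Ideal (MvPolynomial (Fin d) (LaurentPolynomial B)) :=
    Ideal.map (MvPolynomial.map (LaurentPolynomial.C : B →+* LaurentPolynomial B)) I with hII
  -- `Itt` is the image of `II` under the twist automorphism
  have hIttmap : Itt = Ideal.map
      ((BBAux.twistR (fun i => -ξ i) :
        MvPolynomial (Fin d) (LaurentPolynomial B) ≃+*
          MvPolynomial (Fin d) (LaurentPolynomial B)) :
        MvPolynomial (Fin d) (LaurentPolynomial B) →+*
          MvPolynomial (Fin d) (LaurentPolynomial B)) II := by
    have himg : torusAct ξ '' (I : Set (MvPolynomial (Fin d) B)) =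
        (⇑(BBAux.twist (fun i => -ξ i)) ∘
          ⇑(MvPolynomial.map (LaurentPolynomial.C : B →+* LaurentPolynomial B))) '' I :=
      Set.image_congr' (fun f => BBAux.torusAct_eq ξ f)
    have hIIspan : II = Ideal.span
        ((MvPolynomial.map (LaurentPolynomial.C : B →+* LaurentPolynomial B)) ''
          (I : Set (MvPolynomial (Fin d) B))) := by
      rw [hII]
      conv_lhs => rw [← Ideal.span_eq I]
      rw [Ideal.map_span]
    rw [hItt, himg, Set.image_comp, hIIspan, Ideal.map_span, BBAux.twistR_coe]
  -- membership in `Itt`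
  have hmemItt : ∀ p : MvPolynomial (Fin d) (LaurentPolynomial B),
      p ∈ Itt ↔ BBAux.twist ξ p ∈ II := by
    intro p
    rw [hIttmap, Ideal.map_comap_of_equiv, Ideal.mem_comap, BBAux.twistR_symm_apply]
    have harg : (fun i => -(-ξ i)) = ξ := funext fun i => neg_neg _
    rw [harg]
  -- the key cancellation lemma for `It`
  have keyIt : ∀ cc : Δ → Polynomial B,
      (∑ g ∈ Δ.attach, monomial (g : Fin d →₀ ℕ) (cc g)) ∈ It → ∀ g, cc g = 0 := by
    intro cc hcc
    rw [hIt, Ideal.mem_comap, map_sum] at hcc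
    simp only [map_monomial] at hcc
    rw [hmemItt, map_sum] at hcc
    simp only [BBAux.twist_monomial] at hcc
    have h0 := BBAux.lemC Δ I bI hbI
      (fun g => LaurentPolynomial.T (∑ i, ξ i * (((g : Fin d →₀ ℕ)) i : ℤ)) *
        Polynomial.toLaurent (cc g)) hcc
    intro g
    have h1 := h0 g
    rw [(LaurentPolynomial.isUnit_T _).mul_right_eq_zero] at h1
    exact Polynomial.toLaurent_injective (by simpa using h1)
  -- normal forms
  have NF := fun (e : Fin d →₀ ℕ) (he : e ∉ Δ) =>
    BBAux.normal_form ξ Δ I bI hbI hin e he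
  choose c hc1 hc2 using NF
  have hGIt : ∀ (e) (he : e ∉ Δ), BBAux.Gdef ξ Δ (c e he) e ∈ It := by
    intro e he
    rw [hIt, Ideal.mem_comap, BBAux.Gcalc ξ Δ e (c e he) (hc2 e he), hItt]
    exact Ideal.mul_mem_left _ _ (Ideal.subset_span ⟨_, hc1 e he, rfl⟩)
  -- the ideal generated by the G e
  set JJ : Ideal (MvPolynomial (Fin d) (Polynomial B)) :=
    Ideal.span {q | ∃ e, ∃ he : e ∉ Δ, q = BBAux.Gdef ξ Δ (c e he) e} with hJJ
  have hJJIt : JJ ≤ It := by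
    rw [hJJ, Ideal.span_le]
    rintro q ⟨e, he, rfl⟩
    exact hGIt e he
  -- reduction modulo JJ
  have red : ∀ p : MvPolynomial (Fin d) (Polynomial B),
      ∃ r : Δ → Polynomial B,
        p - ∑ g ∈ Δ.attach, monomial (g : Fin d →₀ ℕ) (r g) ∈ JJ := by
    intro p
    induction p using MvPolynomial.induction_on' with
    | monomial u a =>
      by_cases hu : u ∈ Δ
      · refine ⟨fun g => if g = ⟨u, hu⟩ then a else 0, ?_⟩
        have hs : ∑ g ∈ Δ.attach, monomial (g : Fin d →₀ ℕ)
            (if g = ⟨u, hu⟩ then a else 0) = monomial u a := by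
          rw [Finset.sum_eq_single_of_mem ⟨u, hu⟩ (Finset.mem_attach _ _)]
          · rw [if_pos rfl]
          · intro g _ hg
            rw [if_neg hg, monomial_zero]
        rw [hs, sub_self]
        exact JJ.zero_mem
      · refine ⟨fun g => a * Polynomial.monomial
          ((∑ i, ξ i * (u i : ℤ)) - ∑ i, ξ i * (((g : Fin d →₀ ℕ)) i : ℤ)).toNat
            (c u hu g), ?_⟩
        rw [← BBAux.Gsmul]
        exact Ideal.mul_mem_left _ _ (Ideal.subset_span ⟨u, hu, rfl⟩)
    | add p q hp hq =>
      obtain ⟨r1, h1⟩ := hp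
      obtain ⟨r2, h2⟩ := hq
      refine ⟨r1 + r2, ?_⟩
      have hs : ∑ g ∈ Δ.attach, monomial (g : Fin d →₀ ℕ) ((r1 + r2) g)
          = (∑ g ∈ Δ.attach, monomial (g : Fin d →₀ ℕ) (r1 g))
            + ∑ g ∈ Δ.attach, monomial (g : Fin d →₀ ℕ) (r2 g) := by
        rw [← Finset.sum_add_distrib]
        exact Finset.sum_congr rfl fun g _ => by rw [Pi.add_apply, map_add]
      rw [hs, show p + q - ((∑ g ∈ Δ.attach, monomial (g : Fin d →₀ ℕ) (r1 g))
            + ∑ g ∈ Δ.attach, monomial (g : Fin d →₀ ℕ) (r2 g))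
          = (p - ∑ g ∈ Δ.attach, monomial (g : Fin d →₀ ℕ) (r1 g))
            + (q - ∑ g ∈ Δ.attach, monomial (g : Fin d →₀ ℕ) (r2 g)) by ring]
      exact JJ.add_mem h1 h2
  -- It = JJ
  have hItJJ : It = JJ := by
    refine le_antisymm (fun p hp => ?_) hJJIt
    obtain ⟨r, hr⟩ := red p
    have hq : (∑ g ∈ Δ.attach, monomial (g : Fin d →₀ ℕ) (r g)) ∈ It := by
      have := It.sub_mem hp (hJJIt hr)
      simpa using this
    have hr0 := keyIt r hq
    have hz : (∑ g ∈ Δ.attach, monomial (g : Fin d →₀ ℕ) (r g)) = 0 := by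
      refine Finset.sum_eq_zero fun g _ => ?_
      rw [hr0 g, monomial_zero]
    rw [hz, sub_zero] at hr
    exact hr
  constructor
  · -- the basis
    set v : Δ → MvPolynomial (Fin d) (Polynomial B) ⧸ It := fun g =>
      Ideal.Quotient.mk It (monomial (g : Fin d →₀ ℕ) (1 : Polynomial B)) with hv
    have hli : LinearIndependent (Polynomial B) v := by
      refine Fintype.linearIndependent_iff.mpr fun cc hcc g => ?_
      have hmk : Ideal.Quotient.mk It
          (∑ g ∈ Δ.attach, monomial (g : Fin d →₀ ℕ) (cc g)) = 0 := by
        rw [map_sum, ← hcc, Finset.univ_eq_attach]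
        exact Finset.sum_congr rfl fun x _ => BBAux.mk_monomial_smul It _ _
      exact keyIt cc (Ideal.Quotient.eq_zero_iff_mem.mp hmk) g
    have hsp : ⊤ ≤ Submodule.span (Polynomial B) (Set.range v) := by
      rintro x -
      obtain ⟨p, rfl⟩ := Ideal.Quotient.mk_surjective x
      induction p using MvPolynomial.induction_on' with
      | monomial u a =>
        by_cases hu : u ∈ Δ
        · rw [BBAux.mk_monomial_smul It u a]
          exact Submodule.smul_mem _ _ (Submodule.subset_span ⟨⟨u, hu⟩, rfl⟩)
        · have h0 : Ideal.Quotient.mk It (BBAux.Gdef ξ Δ (c u hu) u) = 0 :=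
            Ideal.Quotient.eq_zero_iff_mem.mpr (hGIt u hu)
          rw [BBAux.Gdef_eq, map_sub, sub_eq_zero, map_sum] at h0
          rw [BBAux.mk_monomial_smul It u a, h0]
          refine Submodule.smul_mem _ _ (Submodule.sum_mem _ fun g _ => ?_)
          rw [BBAux.mk_monomial_smul It]
          exact Submodule.smul_mem _ _ (Submodule.subset_span ⟨g, rfl⟩)
      | add p q hp hq =>
        rw [map_add]
        exact Submodule.add_mem _ hp hq
    refine ⟨Module.Basis.mk hli hsp, fun e => ?_⟩
    rw [Module.Basis.mk_apply]
  · -- the fiber at 0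
    rw [hItJJ, hJJ, Ideal.map_span]
    congr 1
    ext q
    constructor
    · rintro ⟨q', ⟨e, he, rfl⟩, rfl⟩
      exact ⟨e, he, BBAux.Gev0 ξ Δ e (c e he) (hc2 e he)⟩
    · rintro ⟨e, he, rfl⟩
      exact ⟨BBAux.Gdef ξ Δ (c e he) e, ⟨e, he, rfl⟩, BBAux.Gev0 ξ Δ e (c e he) (hc2 e he)⟩
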